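/- Let m ∈ ℕ, p ∈ ℤ≥0, and n := (p+2)^m. Then there exist positive real numbers a_{αβ}, α ∈ {1,…,m}, β ∈ {1,…,n}, such that the vectors v(p₁,…,p_m) ∈ ℝ^n, whose β-th entry equals ∏_{α=1}^m a_{αβ}^{p_α}, taken over all (p₁,…,p_m) ∈ ℤ≥0^m with p₁+…+p_m ≤ p, are linearly independent. -/

import Mathlib

theorem stmt3 (m p : ℕ) :
    ∃ a : Fin m → Fin ((p + 2) ^ m) → ℝ, (∀ α β, 0 < a α β) ∧
      LinearIndependent ℝ
        (fun (q : {q : Fin m → ℕ // ∑ α, q α ≤ p}) =>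
          (fun β => ∏ α, a α β ^ q.1 α : Fin ((p + 2) ^ m) → ℝ)) := by
  set n := (p + 2) ^ m with hn
  set b : Fin n → ℝ := fun β => (β : ℝ) + 1 with hb
  have hbpos : ∀ β, 0 < b β := by
    intro β
    positivity
  have hbinj : Function.Injective b := by
    intro β γ h
    have : (β : ℝ) = (γ : ℝ) := by simpa [hb] using h
    exact_mod_cast Fin.ext (by exact_mod_cast this)
  refine ⟨fun α β => b β ^ ((p + 2) ^ (α : ℕ)), fun α β => pow_pos (hbpos β) _, ?_⟩
  -- digit bound
  have hdig : ∀ (q : {q : Fin m → ℕ // ∑ α, q α ≤ p}) (α : Fin m),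
      q.1 α < p + 2 := by
    intro q α
    have : q.1 α ≤ ∑ α, q.1 α :=
      Finset.single_le_sum (fun i _ => Nat.zero_le _) (Finset.mem_univ α)
    omega
  -- the index map
  set e : {q : Fin m → ℕ // ∑ α, q α ≤ p} → Fin n :=
    fun q => finFunctionFinEquiv (fun α => (⟨q.1 α, hdig q α⟩ : Fin (p + 2))) with he
  have heinj : Function.Injective e := by
    intro q q' h
    have := finFunctionFinEquiv.injective h
    ext α
    have := congrFun this α
    simpa using congrArg Fin.val this
  -- linear independence of the monomial family
  have hV : LinearIndependent ℝ (fun i : Fin n => (fun β => b β ^ (i : ℕ) : Fin n → ℝ)) := by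
    have hdet : (Matrix.vandermonde b).det ≠ 0 :=
      Matrix.det_vandermonde_ne_zero_iff.mpr hbinj
    have hunit : IsUnit (Matrix.vandermonde b) :=
      (Matrix.isUnit_iff_isUnit_det _).mpr hdet.isUnit
    have h := Matrix.linearIndependent_cols_iff_isUnit.mpr hunit
    exact h
  have key : (fun (q : {q : Fin m → ℕ // ∑ α, q α ≤ p}) =>
        (fun β => ∏ α : Fin m, (b β ^ ((p + 2) ^ (α : ℕ))) ^ q.1 α : Fin n → ℝ)) =
      (fun i : Fin n => (fun β => b β ^ (i : ℕ) : Fin n → ℝ)) ∘ e := by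
    funext q
    funext β
    simp only [Function.comp_apply, he, finFunctionFinEquiv_apply]
    rw [← Finset.prod_pow_eq_pow_sum]
    apply Finset.prod_congr rfl
    intro α _
    rw [← pow_mul, Nat.mul_comm]
  rw [key]
  exact hV.comp e heinj
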